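/- Let K be a commutative ring, G a group, a ∈ G an element of finite order n ≥ 1, b ∈ G, and k an integer. In the group of units of the group ring KG, the units w = 1 + (a-1)bâ and u_k = a^k + (a-1)bâ = w·a^k satisfy the relation ((u_k, w), w) = 1; that is, the commutator (u_k, w) commutes with w. -/

import Mathlib

private lemma aux_ring_14 {R : Type*} [Ring R] (x y z : R)
    (h1 : x * x = 0) (h2 : x * y = x) (h3 : x * z = x) (h4 : z * y = 1) :
    (z - z * x) * (1 - x) * (y + x) * (1 + x) * (1 + x)
      = (1 + x) * ((z - z * x) * (1 - x) * (y + x) * (1 + x)) := by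
  have e1 : (z - z * x) * (1 - x) = z - 2 * (z * x) := by
    have h : (z - z * x) * (1 - x) = z - 2 * (z * x) + z * (x * x) := by noncomm_ring
    rw [h, h1, mul_zero, add_zero]
  have e2 : (y + x) * (1 + x) = y + y * x + x := by
    have h : (y + x) * (1 + x) = y + y * x + x + x * x := by noncomm_ring
    rw [h, h1, add_zero]
  have e3 : (z - 2 * (z * x)) * (y + y * x + x) = 1 + x - z * x := by
    have h : (z - 2 * (z * x)) * (y + y * x + x)
        = z * y + (z * y) * x + z * x - 2 * (z * (x * y)) - 2 * (z * ((x * y) * x))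
          - 2 * (z * (x * x)) := by noncomm_ring
    rw [h, h2, h1, h4]
    noncomm_ring
  have key : (z - z * x) * (1 - x) * (y + x) * (1 + x) = 1 + x - z * x := by
    calc (z - z * x) * (1 - x) * (y + x) * (1 + x)
        = ((z - z * x) * (1 - x)) * ((y + x) * (1 + x)) := by rw [mul_assoc]
      _ = (z - 2 * (z * x)) * (y + y * x + x) := by rw [e1, e2]
      _ = 1 + x - z * x := e3
  have e4 : (1 + x - z * x) * (1 + x) = 1 + 2 * x - z * x := by
    have h : (1 + x - z * x) * (1 + x)
        = 1 + 2 * x - z * x + x * x - z * (x * x) := by noncomm_ring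
    rw [h, h1]
    noncomm_ring
  have e5 : (1 + x) * (1 + x - z * x) = 1 + 2 * x - z * x := by
    have h : (1 + x) * (1 + x - z * x)
        = 1 + 2 * x - z * x + x * x - (x * z) * x := by noncomm_ring
    rw [h, h3, h1]
    noncomm_ring
  rw [key, e4, e5]

theorem stmt_14 {K : Type*} [CommRing K] {G : Type*} [Group G]
    (a b : G) (n : ℕ) (hn : 1 ≤ n) (ha : orderOf a = n) (k : ℤ)
    (ahat : MonoidAlgebra K G)
    (hahat : ahat = ∑ i ∈ Finset.range n, (MonoidAlgebra.of K G a) ^ i)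
    (w u : (MonoidAlgebra K G)ˣ)
    (hw : (w : MonoidAlgebra K G) = 1 + (MonoidAlgebra.of K G a - 1) * MonoidAlgebra.of K G b * ahat)
    (hw' : ((w⁻¹ : (MonoidAlgebra K G)ˣ) : MonoidAlgebra K G) = 1 - (MonoidAlgebra.of K G a - 1) * MonoidAlgebra.of K G b * ahat)
    (hu : (u : MonoidAlgebra K G) = MonoidAlgebra.of K G (a ^ k) + (MonoidAlgebra.of K G a - 1) * MonoidAlgebra.of K G b * ahat)
    (hu' : ((u⁻¹ : (MonoidAlgebra K G)ˣ) : MonoidAlgebra K G)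
        = MonoidAlgebra.of K G (a ^ (-k)) - MonoidAlgebra.of K G (a ^ (-k)) * ((MonoidAlgebra.of K G a - 1) * MonoidAlgebra.of K G b * ahat)) :
    (u⁻¹ * w⁻¹ * u * w) * w = w * (u⁻¹ * w⁻¹ * u * w) := by
  set f := MonoidAlgebra.of K G with hf
  -- key annihilation: ahat * (f a - 1) = 0
  have hx0 : ahat * (f a - 1) = 0 := by
    rw [hahat, geom_sum_mul, ← map_pow, ← ha, pow_orderOf_eq_one, map_one, sub_self]
  have hA : ahat * f a = ahat := by
    have h := hx0
    rw [mul_sub, mul_one, sub_eq_zero] at h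
    exact h
  have hAinv : ahat * f a⁻¹ = ahat := by
    conv_lhs => rw [← hA]
    rw [mul_assoc, ← map_mul, mul_inv_cancel, map_one, mul_one]
  have hAz : ∀ m : ℤ, ahat * f (a ^ m) = ahat := by
    intro m
    induction m using Int.induction_on with
    | zero => simp
    | succ i ih => rw [zpow_add_one, map_mul, ← mul_assoc, ih, hA]
    | pred i ih => rw [zpow_sub_one, map_mul, ← mul_assoc, ih, hAinv]
  set x : MonoidAlgebra K G := (f a - 1) * f b * ahat with hx
  have h1 : x * x = 0 := by
    have h : x * x = ((f a - 1) * f b) * ((ahat * (f a - 1)) * (f b * ahat)) := by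
      rw [hx]; noncomm_ring
    rw [h, hx0, zero_mul, mul_zero]
  have h2 : x * f (a ^ k) = x := by
    rw [hx, mul_assoc, hAz k]
  have h3 : x * f (a ^ (-k)) = x := by
    rw [hx, mul_assoc, hAz (-k)]
  have h4 : f (a ^ (-k)) * f (a ^ k) = 1 := by
    rw [← map_mul, ← zpow_add, neg_add_cancel, zpow_zero, map_one]
  rw [Units.ext_iff]
  simp only [Units.val_mul]
  rw [hw, hw', hu, hu']
  exact aux_ring_14 x (f (a ^ k)) (f (a ^ (-k))) h1 h2 h3 h4
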